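/- Let d ≥ 1, r > 0, and let V̂ : ℤ^d → ℝ satisfy V̂(k) = 0 for |k| > r, V̂(−k) = V̂(k), and V̂(0) = 0; write ‖V̂‖₁ = (2π)^{−d}·∑_{k∈ℤ^d}|V̂(k)|. There exists a constant C > 0, depending only on d, ‖V̂‖₁ and ∑_k V̂(k)², such that whenever λ > 0 satisfies λ·‖V̂‖₁ ≤ 1/2 and p_F ≥ 1, then for every bounded f : ℤ^d → ℝ and every t > 0: sup_{q∈ℤ^d} |B_t[f](q) − t·𝓑[f](q)| ≤ C·t·(1/t² + (λt)²)·p_F^{d−1}·(sup_p|1 − f(p)|)·(sup_p|f(p)|). -/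

import Mathlib

open Real

/-- The Euclidean norm of a lattice point in `ℤ^d`. -/
noncomputable def zNorm {d : ℕ} (p : Fin d → ℤ) : ℝ := Real.sqrt (∑ i, ((p i : ℝ)) ^ 2)

/-- The indicator `χ` of the Fermi ball of radius `p_F`. -/
noncomputable def chi {d : ℕ} (pF : ℝ) (p : Fin d → ℤ) : ℝ := if zNorm p ≤ pF then 1 else 0

/-- The indicator `χ^⊥ = 1 − χ` of the complement of the Fermi ball. -/
noncomputable def chiP {d : ℕ} (pF : ℝ) (p : Fin d → ℤ) : ℝ := 1 - chi pF p

/-- The profile of the mollified delta function: `δ₁(E) = (2/π)·sin²(E/2)/E²` for `E ≠ 0`,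
extended by its limit `1/(2π)` at `E = 0`. -/
noncomputable def delta1 (E : ℝ) : ℝ :=
  if E = 0 then 1 / (2 * π) else (2 / π) * (Real.sin (E / 2)) ^ 2 / E ^ 2

/-- The mollified delta function `δ_t(E) = t·δ₁(t·E)`. -/
noncomputable def deltaT (t E : ℝ) : ℝ := t * delta1 (t * E)

/-- The normalized convolution `(V̂⋆g)(q) = (2π)^{−d}·∑_k V̂(k)·g(q−k)`. -/
noncomputable def conv {d : ℕ} (Vh g : (Fin d → ℤ) → ℝ) (q : Fin d → ℤ) : ℝ :=
  ((2 * π) ^ d)⁻¹ * ∑' k : Fin d → ℤ, Vh k * g (q - k)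

/-- The `ℓ¹`-norm `‖V̂‖₁ = (2π)^{−d}·∑_k |V̂(k)|`. -/
noncomputable def VhatL1 {d : ℕ} (Vh : (Fin d → ℤ) → ℝ) : ℝ :=
  ((2 * π) ^ d)⁻¹ * ∑' k : Fin d → ℤ, |Vh k|

/-- The dispersion relation
`E_q = χ^⊥(q)·(|q|²/2 − (λ/2)·(V̂⋆χ)(q)) − χ(q)·(|q|²/2 + (λ/2)·(V̂⋆χ^⊥)(q))`. -/
noncomputable def disp {d : ℕ} (pF lam : ℝ) (Vh : (Fin d → ℤ) → ℝ) (q : Fin d → ℤ) : ℝ :=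
  chiP pF q * ((zNorm q) ^ 2 / 2 - (lam / 2) * conv Vh (chi pF) q)
    - chi pF q * ((zNorm q) ^ 2 / 2 + (lam / 2) * conv Vh (chiP pF) q)

/-- The mollified coefficient `α_t^H(h,k)` for holes. -/
noncomputable def alphaHt {d : ℕ} (pF lam t : ℝ) (Vh : (Fin d → ℤ) → ℝ)
    (h k : Fin d → ℤ) : ℝ :=
  chi pF h * chi pF (h + k) * ((2 * π) ^ d)⁻¹ *
    ∑' r : Fin d → ℤ, chi pF r * chiP pF (r + k) *
      deltaT t (disp pF lam Vh h - disp pF lam Vh (h + k)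
        - disp pF lam Vh r - disp pF lam Vh (r + k))

/-- The mollified coefficient `α_t^P(p,k)` for particles. -/
noncomputable def alphaPt {d : ℕ} (pF lam t : ℝ) (Vh : (Fin d → ℤ) → ℝ)
    (p k : Fin d → ℤ) : ℝ :=
  chiP pF p * chiP pF (p - k) * ((2 * π) ^ d)⁻¹ *
    ∑' r : Fin d → ℤ, chi pF r * chiP pF (r + k) *
      deltaT t (disp pF lam Vh p - disp pF lam Vh (p - k)
        - disp pF lam Vh r - disp pF lam Vh (r + k))

/-- The limiting coefficient `α^H(h,k)` for holes. -/
noncomputable def alphaH {d : ℕ} (pF : ℝ) (h k : Fin d → ℤ) : ℝ :=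
  (1 / (2 * π)) * chi pF h * chi pF (h + k) * ((2 * π) ^ d)⁻¹ *
    ∑' r : Fin d → ℤ, chi pF r * chiP pF (r + k) *
      (if (∑ i, r i * k i) = ∑ i, h i * k i then 1 else 0)

/-- The limiting coefficient `α^P(p,k)` for particles. -/
noncomputable def alphaP {d : ℕ} (pF : ℝ) (p k : Fin d → ℤ) : ℝ :=
  (1 / (2 * π)) * chiP pF p * chiP pF (p - k) * ((2 * π) ^ d)⁻¹ *
    ∑' r : Fin d → ℤ, chi pF r * chiP pF (r + k) *
      (if (∑ i, r i * k i) = ∑ i, (p i - k i) * k i then 1 else 0)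

/-- The mollified bosonized-interaction operator `B_t`. -/
noncomputable def Bt {d : ℕ} (pF lam t : ℝ) (Vh f : (Fin d → ℤ) → ℝ)
    (q : Fin d → ℤ) : ℝ :=
  2 * π * ((2 * π) ^ d)⁻¹ * ∑' k : Fin d → ℤ, (Vh k) ^ 2 *
    (alphaHt pF lam t Vh (q - k) k * f (q - k) * (1 - f q)
      - alphaHt pF lam t Vh q k * f q * (1 - f (q + k))
      + alphaPt pF lam t Vh (q + k) k * f (q + k) * (1 - f q)
      - alphaPt pF lam t Vh q k * f q * (1 - f (q - k)))

/-- The limiting bosonized-interaction operator `𝓑`. -/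
noncomputable def Blim {d : ℕ} (pF : ℝ) (Vh f : (Fin d → ℤ) → ℝ) (q : Fin d → ℤ) : ℝ :=
  2 * π * ((2 * π) ^ d)⁻¹ * ∑' k : Fin d → ℤ, (Vh k) ^ 2 *
    (alphaH pF (q - k) k * f (q - k) * (1 - f q)
      - alphaH pF q k * f q * (1 - f (q + k))
      + alphaP pF (q + k) k * f (q + k) * (1 - f q)
      - alphaP pF q k * f q * (1 - f (q - k)))


lemma znorm_nonneg {d : ℕ} (p : Fin d → ℤ) : 0 ≤ zNorm p := Real.sqrt_nonneg _

lemma znorm_sq {d : ℕ} (p : Fin d → ℤ) : zNorm p ^ 2 = ∑ i, ((p i : ℝ)) ^ 2 :=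
  Real.sq_sqrt (Finset.sum_nonneg fun i _ => sq_nonneg _)

lemma abs_coord_le {d : ℕ} (p : Fin d → ℤ) (i : Fin d) : |(p i : ℝ)| ≤ zNorm p := by
  rw [← Real.sqrt_sq_eq_abs]
  exact Real.sqrt_le_sqrt (Finset.single_le_sum (fun j _ => sq_nonneg ((p j : ℝ))) (Finset.mem_univ i))

lemma chi_of_le {d : ℕ} {pF : ℝ} {p : Fin d → ℤ} (h : zNorm p ≤ pF) : chi pF p = 1 := if_pos h
lemma chi_of_gt {d : ℕ} {pF : ℝ} {p : Fin d → ℤ} (h : ¬ zNorm p ≤ pF) : chi pF p = 0 := if_neg h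
lemma chiP_of_le {d : ℕ} {pF : ℝ} {p : Fin d → ℤ} (h : zNorm p ≤ pF) : chiP pF p = 0 := by
  simp [chiP, chi_of_le h]
lemma chiP_of_gt {d : ℕ} {pF : ℝ} {p : Fin d → ℤ} (h : ¬ zNorm p ≤ pF) : chiP pF p = 1 := by
  simp [chiP, chi_of_gt h]
lemma chi_mem {d : ℕ} (pF : ℝ) (p : Fin d → ℤ) : chi pF p = 0 ∨ chi pF p = 1 := by
  unfold chi; split <;> simp
lemma chi_nonneg {d : ℕ} (pF : ℝ) (p : Fin d → ℤ) : 0 ≤ chi pF p := by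
  rcases chi_mem pF p with h | h <;> rw [h] <;> norm_num
lemma chi_le_one {d : ℕ} (pF : ℝ) (p : Fin d → ℤ) : chi pF p ≤ 1 := by
  rcases chi_mem pF p with h | h <;> rw [h] <;> norm_num
lemma chiP_nonneg {d : ℕ} (pF : ℝ) (p : Fin d → ℤ) : 0 ≤ chiP pF p := by
  simp [chiP, chi_le_one]
lemma chiP_le_one {d : ℕ} (pF : ℝ) (p : Fin d → ℤ) : chiP pF p ≤ 1 := by
  simp [chiP, chi_nonneg]

-- delta lemmas
lemma delta1_nonneg (x : ℝ) : 0 ≤ delta1 x := by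
  unfold delta1; split
  · positivity
  · positivity

lemma delta1_le (x : ℝ) : delta1 x ≤ 1 / (2 * π) := by
  unfold delta1; split
  · exact le_refl _
  · rename_i hx
    have hx2 : (0:ℝ) < x ^ 2 := by positivity
    rw [div_le_div_iff₀ hx2 (by positivity)]
    have h1 : (Real.sin (x / 2)) ^ 2 ≤ (x / 2) ^ 2 := Real.sin_sq_le_sq
    have h2 : 2/π * Real.sin (x/2)^2 * (2*π) = 4 * Real.sin (x/2)^2 := by
      field_simp; ring
    have h3 : 4 * ((x/2)^2) = x^2 := by ring
    linarith

lemma delta1_tail {x : ℝ} (hx : x ≠ 0) : delta1 x ≤ (2 / π) / x ^ 2 := by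
  unfold delta1
  rw [if_neg hx]
  have : (Real.sin (x / 2)) ^ 2 ≤ 1 := by
    have := Real.neg_one_le_sin (x/2); have := Real.sin_le_one (x/2); nlinarith
  have hx2 : (0:ℝ) < x ^ 2 := by positivity
  have hp : (0:ℝ) < 2 / π := by positivity
  rw [div_le_div_iff₀ hx2 hx2]
  have h4 : 2/π * Real.sin (x/2)^2 ≤ 2/π := mul_le_of_le_one_right hp.le this
  exact mul_le_mul_of_nonneg_right h4 hx2.le

lemma delta1_close (x : ℝ) : |delta1 x - 1 / (2 * π)| ≤ x ^ 2 := by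
  rcases le_or_gt 1 |x| with h | h
  · have h1 : 0 ≤ delta1 x := delta1_nonneg x
    have h2 : delta1 x ≤ 1 / (2 * π) := delta1_le x
    have h3 : (0:ℝ) < 1 / (2*π) := by positivity
    have h4 : 1 / (2*π) ≤ 1 := by
      rw [div_le_one (by positivity)]; nlinarith [Real.pi_gt_three]
    have hx2 : (1:ℝ) ≤ x ^ 2 := by nlinarith [sq_abs x]
    rw [abs_le]; constructor <;> nlinarith
  · rcases eq_or_ne x 0 with rfl | hx
    · simp [delta1]
    · unfold delta1
      rw [if_neg hx]
      set u := x / 2 with hu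
      have hu1 : |u| ≤ 1 := by rw [hu, abs_div]; simp; nlinarith [abs_nonneg x]
      have hb := Real.sin_bound hu1
      -- |sin u - u| ≤ |u|^3/6 + 5/96 |u|^4 ≤ |u|^3/4
      have h5 : |Real.sin u - u| ≤ |u| ^ 3 * (1/4) := by
        have : |Real.sin u - u| ≤ |u ^ 3 / 6| + |u|^4 * (5/96) := by
          have : Real.sin u - u = (Real.sin u - (u - u^3/6)) + (- (u^3/6)) := by ring
          rw [this]
          calc |_| ≤ |Real.sin u - (u - u^3/6)| + |-(u^3/6)| := abs_add_le _ _
          _ ≤ |u|^4 * (5/96) + |u^3/6| := by rw [abs_neg]; linarith [hb, pow_le_pow_of_le_one (abs_nonneg u) hu1 (by norm_num : 4 ≤ 5), pow_nonneg (abs_nonneg u) 4]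
          _ = |u^3/6| + |u|^4 * (5/96) := by ring
        have h6 : |u ^ 3 / 6| = |u|^3 / 6 := by rw [abs_div, abs_pow]; norm_num
        have h7 : |u| ^ 4 ≤ |u| ^ 3 := by
          apply pow_le_pow_of_le_one (abs_nonneg u) hu1; norm_num
        calc |Real.sin u - u| ≤ |u^3/6| + |u|^4*(5/96) := this
        _ ≤ |u|^3/6 + |u|^3 * (5/96) := by rw [h6]; linarith
        _ ≤ |u|^3 * (1/4) := by nlinarith [pow_nonneg (abs_nonneg u) 3]
      have h8 : |Real.sin u + u| ≤ 2 * |u| := by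
        calc |Real.sin u + u| ≤ |Real.sin u| + |u| := abs_add_le _ _
        _ ≤ |u| + |u| := by linarith [Real.abs_sin_le_abs (x := u)]
        _ = 2 * |u| := by ring
      have h9 : |Real.sin u ^ 2 - u ^ 2| ≤ |u| ^ 4 / 2 := by
        have : Real.sin u ^ 2 - u ^ 2 = (Real.sin u - u) * (Real.sin u + u) := by ring
        rw [this, abs_mul]
        calc |Real.sin u - u| * |Real.sin u + u| ≤ (|u|^3 * (1/4)) * (2 * |u|) := by
              apply mul_le_mul h5 h8 (abs_nonneg _) (by positivity)
        _ = |u|^4 / 2 := by ring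
      -- now the main computation
      have hx2 : (0:ℝ) < x ^ 2 := by positivity
      have key : (2/π) * Real.sin u ^ 2 / x ^ 2 - 1/(2*π) = (2/π) * (Real.sin u ^2 - u^2) / x^2 := by
        field_simp [hu]
        ring
      rw [key, abs_div, abs_mul]
      rw [div_le_iff₀ (by positivity : (0:ℝ) < |x^2|)]
      have hax : |x ^ 2| = x ^ 2 := abs_of_nonneg (le_of_lt hx2)
      have hpi : |(2:ℝ)/π| = 2/π := abs_of_nonneg (by positivity)
      rw [hax, hpi]
      have hu4 : |u| ^ 4 = x^4 / 16 := by
        rw [hu, abs_div, div_pow, ← abs_pow,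
          abs_of_nonneg (by positivity : (0:ℝ) ≤ x^4)]
        norm_num
      calc (2/π) * |Real.sin u ^2 - u^2| ≤ (2/π) * (|u|^4/2) := by
            apply mul_le_mul_of_nonneg_left h9 (by positivity)
      _ = (1/π) * (x^4/16) := by rw [hu4]; ring
      _ ≤ x^2 * x^2 := by
          have hxx : x^2 ≤ 1 := by nlinarith [sq_abs x, abs_nonneg x]
          have hpi1 : 1/π ≤ 1 := by
            rw [div_le_one Real.pi_pos]; linarith [Real.pi_gt_three]
          have hx4 : (0:ℝ) ≤ x^4/16 := by positivity
          calc (1/π) * (x^4/16) ≤ 1 * (x^4/16) := mul_le_mul_of_nonneg_right hpi1 hx4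
          _ ≤ x^2 * x^2 := by nlinarith [sq_nonneg x]

-- scalar lemma
noncomputable def psi (t lam N1v : ℝ) (n : ℤ) : ℝ :=
  if n = 0 then 4 * lam^2 * t^3 * N1v^2
  else if n.natAbs = 1 then 3/t + 16 * lam^2 * N1v^2 * t^3
  else (3/t) / (n:ℝ)^2

lemma psi_nonneg {t lam N1v : ℝ} (ht : 0 < t) (n : ℤ) : 0 ≤ psi t lam N1v n := by
  unfold psi; split
  · positivity
  · split
    · positivity
    · positivity

lemma deltaT_nonneg {t E : ℝ} (ht : 0 ≤ t) : 0 ≤ deltaT t E :=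
  mul_nonneg ht (delta1_nonneg _)

lemma aux_h4 {t E : ℝ} (ht : t ≠ 0) (hE : E ≠ 0) :
    t * ((2/π)/(t*E)^2) = (2/π)/(t*E^2) := by
  have hp := Real.pi_ne_zero
  rw [mul_pow]
  field_simp

lemma scalar_bound {t lam N1v E : ℝ} {n : ℤ} (ht : 0 < t) (hlam : 0 ≤ lam) (hN : 0 ≤ N1v)
    (h1 : |E - n| ≤ 1) (h2 : |E - n| ≤ 2 * lam * N1v) :
    |deltaT t E - (t / (2 * π)) * (if n = 0 then 1 else 0)| ≤ psi t lam N1v n := by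
  unfold psi deltaT
  rcases eq_or_ne n 0 with rfl | hn
  · rw [if_pos rfl, if_pos rfl, mul_one]
    have hE : |E| ≤ 2 * lam * N1v := by simpa using h2
    have : t * delta1 (t*E) - t/(2*π) = t * (delta1 (t*E) - 1/(2*π)) := by ring
    rw [this, abs_mul, abs_of_pos ht]
    calc t * |delta1 (t*E) - 1/(2*π)| ≤ t * (t*E)^2 :=
          mul_le_mul_of_nonneg_left (delta1_close _) ht.le
    _ ≤ 4 * lam^2 * t^3 * N1v^2 := by
        have : (t*E)^2 = t^2 * E^2 := by ring
        have hE2 : E^2 ≤ (2*lam*N1v)^2 := by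
          rw [← sq_abs E]
          exact pow_le_pow_left₀ (abs_nonneg E) hE 2
        nlinarith [sq_nonneg E, pow_pos ht 3, ht.le]
  · rw [if_neg hn, if_neg hn, mul_zero, sub_zero,
      abs_of_nonneg (mul_nonneg ht.le (delta1_nonneg _) : (0:ℝ) ≤ t * delta1 (t*E))]
    have hnabs : (1:ℝ) ≤ |(n:ℝ)| := by
      rw [← Int.cast_abs]
      exact_mod_cast Int.one_le_abs (by exact_mod_cast hn)
    rcases eq_or_ne n.natAbs 1 with hone | hone
    · rw [if_pos hone]
      rcases le_or_gt (1/2 : ℝ) |E| with hE | hE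
      · -- delta1(tE) ≤ (2/π)/(tE)^2, so t*delta1 ≤ (2/π)/(t E^2) ≤ 8/(π t) ≤ 3/t
        have htE : t * E ≠ 0 := by
          intro hc
          rcases mul_eq_zero.1 hc with h | h
          · exact ht.ne' h
          · rw [h] at hE; simp at hE; linarith
        have hd := delta1_tail htE
        have hE2 : (1/4 : ℝ) ≤ E^2 := by nlinarith [sq_abs E, abs_nonneg E]
        have h3 : t * delta1 (t*E) ≤ t * ((2/π)/(t*E)^2) :=
          mul_le_mul_of_nonneg_left hd ht.le
        have hEne : E ≠ 0 := by
          intro hc; rw [hc] at hE; simp at hE; linarith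
        have h4 := aux_h4 ht.ne' hEne
        have h5 : (2/π) / (t * E^2) ≤ 3/t := by
          rw [div_le_div_iff₀ (by positivity) ht]
          have : 2/π ≤ 3/4 := by
            rw [div_le_div_iff₀ Real.pi_pos (by norm_num)]
            linarith [Real.pi_gt_three]
          nlinarith [ht.le, Real.pi_pos]
        have : (0:ℝ) ≤ 16 * lam^2 * N1v^2 * t^3 := by positivity
        rw [h4] at h3
        linarith
      · -- |E| < 1/2 forces 2 lam N1v ≥ 1/2
        have hlow : (1/2:ℝ) ≤ 2 * lam * N1v := by
          have : |(n:ℝ)| - |E| ≤ |E - n| := by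
            have := abs_sub_abs_le_abs_sub (n:ℝ) E
            rw [abs_sub_comm] at this
            linarith
          linarith
        have h16 : (1:ℝ) ≤ 16 * lam^2 * N1v^2 := by nlinarith
        have hd : t * delta1 (t*E) ≤ t * (1/(2*π)) :=
          mul_le_mul_of_nonneg_left (delta1_le _) ht.le
        have ht6 : t * (1/(2*π)) ≤ t := by
          have : 1/(2*π) ≤ 1 := by
            rw [div_le_one (by positivity)]; linarith [Real.pi_gt_three]
          nlinarith [ht.le]
        have hfin : t ≤ 3/t + 16 * lam^2 * N1v^2 * t^3 := by
          rcases le_total t 1 with h | h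
          · have : t ≤ 3/t := by
              rw [le_div_iff₀ ht]; nlinarith
            have : (0:ℝ) ≤ 16*lam^2*N1v^2*t^3 := by positivity
            linarith
          · have : t ≤ t^3 := by
              have h13 : t^1 ≤ t^3 := pow_le_pow_right₀ h (by norm_num)
              simpa using h13
            have h2' : t^3 ≤ 16*lam^2*N1v^2*t^3 := by nlinarith [pow_pos ht 3]
            have : (0:ℝ) < 3/t := by positivity
            linarith
        linarith
    · rw [if_neg hone]
      -- |n| ≥ 2
      have h2n : 2 ≤ n.natAbs := by omega
      have hn2 : (2:ℝ) ≤ |(n:ℝ)| := by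
        rw [← Int.cast_abs, Int.abs_eq_natAbs]
        exact_mod_cast h2n
      have hEg : |(n:ℝ)|/2 ≤ |E| := by
        have h' := abs_sub_abs_le_abs_sub (n:ℝ) E
        rw [abs_sub_comm] at h'
        linarith
      have hEpos : (0:ℝ) < |E| := by linarith
      have hEne : E ≠ 0 := by
        intro hc; rw [hc] at hEpos; simp at hEpos
      have htE : t * E ≠ 0 := mul_ne_zero ht.ne' hEne
      have hd := delta1_tail htE
      have h3 : t * delta1 (t*E) ≤ t * ((2/π)/(t*E)^2) :=
        mul_le_mul_of_nonneg_left hd ht.le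
      have h4 := aux_h4 ht.ne' hEne
      have hE2 : (n:ℝ)^2/4 ≤ E^2 := by
        nlinarith [sq_abs E, sq_abs (n:ℝ), abs_nonneg (n:ℝ)]
      have hn2pos : (0:ℝ) < (n:ℝ)^2 := by nlinarith [sq_abs (n:ℝ)]
      have hE2pos : (0:ℝ) < E^2 := by positivity
      have h5 : (2/π) / (t * E^2) ≤ (3/t)/(n:ℝ)^2 := by
        rw [div_le_div_iff₀ (mul_pos ht hE2pos) hn2pos]
        have heq : (3/t) * (t * E^2) = 3 * E^2 := by field_simp
        rw [heq]
        have hpi : 2/π ≤ 3/4 := by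
          rw [div_le_div_iff₀ Real.pi_pos (by norm_num)]
          linarith [Real.pi_gt_three]
        have h6 : 2/π * (n:ℝ)^2 ≤ 3/4 * (n:ℝ)^2 :=
          mul_le_mul_of_nonneg_right hpi hn2pos.le
        linarith [hE2]
      rw [h4] at h3
      linarith

-- boxes and counting
noncomputable def box (d m : ℕ) : Finset (Fin d → ℤ) :=
  Fintype.piFinset fun _ => Finset.Icc (-(m:ℤ)) (m:ℤ)

lemma mem_box_of_znorm_le {d : ℕ} {R : ℝ} {x : Fin d → ℤ} (h : zNorm x ≤ R) :
    x ∈ box d ⌈R⌉₊ := by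
  rw [box, Fintype.mem_piFinset]
  intro i
  rw [Finset.mem_Icc, ← abs_le]
  have h1 : |(x i : ℝ)| ≤ R := le_trans (abs_coord_le x i) h
  have h2 : (|x i| : ℝ) ≤ (⌈R⌉₊ : ℝ) := by
    push_cast
    exact le_trans h1 (Nat.le_ceil R)
  exact_mod_cast h2

lemma slice_card {d : ℕ} (m : ℕ) (k : Fin d → ℤ) (hk : k ≠ 0) (s : ℤ) :
    (((box d m).filter (fun x => (∑ i, x i * k i) = s)).card : ℝ)
      ≤ ((2*m+1 : ℕ))^(d-1) := by
  obtain ⟨i₀, hi₀⟩ : ∃ i, k i ≠ 0 := by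
    by_contra hc
    push_neg at hc
    exact hk (funext hc)
  classical
  set B0 : Finset (Fin d → ℤ) :=
    Fintype.piFinset (fun i => if i = i₀ then ({0} : Finset ℤ) else Finset.Icc (-(m:ℤ)) m)
    with hB0
  have hcard : B0.card = (2*m+1)^(d-1) := by
    rw [hB0, Fintype.card_piFinset]
    have hc : ∀ i : Fin d, ((if i = i₀ then ({0} : Finset ℤ) else Finset.Icc (-(m:ℤ)) m)).card
        = if i = i₀ then 1 else (2*m+1) := by
      intro i
      split
      · simp
      · rw [Int.card_Icc]; omega
    rw [Finset.prod_congr rfl (fun i _ => hc i),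
      ← Finset.mul_prod_erase Finset.univ _ (Finset.mem_univ i₀), if_pos rfl, one_mul]
    rw [Finset.prod_congr rfl (fun i hi => if_neg (Finset.ne_of_mem_erase hi)),
      Finset.prod_const, Finset.card_erase_of_mem (Finset.mem_univ i₀)]
    simp
  have hinj : Set.InjOn (fun x : Fin d → ℤ => Function.update x i₀ 0)
      (((box d m).filter (fun x => (∑ i, x i * k i) = s) : Finset (Fin d → ℤ)) : Set (Fin d → ℤ)) := by
    intro x hx y hy hxy
    simp only [Finset.coe_filter, Set.mem_setOf_eq] at hx hy
    have hxy' : ∀ i, i ≠ i₀ → x i = y i := by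
      intro i hi
      have := congrFun hxy i
      simpa [Function.update, hi] using this
    have hsum : x i₀ * k i₀ = y i₀ * k i₀ := by
      have ex := Finset.add_sum_erase Finset.univ (fun i => x i * k i) (Finset.mem_univ i₀)
      have ey := Finset.add_sum_erase Finset.univ (fun i => y i * k i) (Finset.mem_univ i₀)
      have heq : ∑ i ∈ Finset.univ.erase i₀, x i * k i
          = ∑ i ∈ Finset.univ.erase i₀, y i * k i := by
        apply Finset.sum_congr rfl
        intro i hi
        rw [hxy' i (Finset.ne_of_mem_erase hi)]
      rw [hx.2] at ex
      rw [hy.2] at ey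
      rw [heq] at ex
      omega
    have : x i₀ = y i₀ := mul_right_cancel₀ hi₀ hsum
    funext i
    by_cases hi : i = i₀
    · rw [hi]; exact this
    · exact hxy' i hi
  have hmaps : ∀ x ∈ (box d m).filter (fun x => (∑ i, x i * k i) = s),
      Function.update x i₀ 0 ∈ B0 := by
    intro x hx
    rw [Finset.mem_filter] at hx
    rw [hB0, Fintype.mem_piFinset]
    intro i
    by_cases hi : i = i₀
    · subst hi; simp [Function.update]
    · rw [if_neg hi, Function.update_of_ne hi]
      have := hx.1
      rw [box, Fintype.mem_piFinset] at this
      exact this i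
  have := Finset.card_le_card_of_injOn _ hmaps hinj
  rw [hcard] at this
  exact_mod_cast this

-- psi sum bound
noncomputable def Zconst : ℝ := ∑' s : ℤ, (if s.natAbs ≤ 1 then 0 else ((s:ℝ)^2)⁻¹)

lemma zfun_nonneg (s : ℤ) : (0:ℝ) ≤ (if s.natAbs ≤ 1 then 0 else ((s:ℝ)^2)⁻¹) := by
  split
  · exact le_refl 0
  · positivity

lemma zfun_summable : Summable (fun s : ℤ => (if s.natAbs ≤ 1 then 0 else ((s:ℝ)^2)⁻¹)) := by
  apply Summable.of_nonneg_of_le zfun_nonneg (fun s => ?_)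
    ((summable_one_div_int_pow (p := 2)).mpr (by norm_num))
  split
  · positivity
  · rw [one_div]

lemma Zconst_nonneg : 0 ≤ Zconst :=
  tsum_nonneg zfun_nonneg

lemma psi_sum_bound {t lam N1v : ℝ} (ht : 0 < t) (hlam : 0 ≤ lam) (hN : 0 ≤ N1v)
    (T : Finset ℤ) :
    ∑ s ∈ T, psi t lam N1v s
      ≤ 4*lam^2*t^3*N1v^2 + 2*(3/t + 16*lam^2*N1v^2*t^3) + (3/t) * Zconst := by
  have hptw : ∀ s ∈ T, psi t lam N1v s
      ≤ (if s = 0 then 4*lam^2*t^3*N1v^2 else 0)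
        + (if s.natAbs = 1 then 3/t + 16*lam^2*N1v^2*t^3 else 0)
        + (3/t) * (if s.natAbs ≤ 1 then 0 else ((s:ℝ)^2)⁻¹) := by
    intro s _
    unfold psi
    rcases eq_or_ne s 0 with rfl | hs0
    · simp only [if_pos rfl]
      have : (0:ℤ).natAbs = 0 := rfl
      rw [if_neg (by omega : ¬ (0:ℤ).natAbs = 1), if_pos (by omega : (0:ℤ).natAbs ≤ 1)]
      simp
    · rw [if_neg hs0, if_neg hs0]
      rcases eq_or_ne s.natAbs 1 with h1 | h1
      · rw [if_pos h1, if_pos h1, if_pos (by omega)]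
        simp
      · rw [if_neg h1, if_neg h1, if_neg (by
          have : s.natAbs ≠ 0 := by
            intro hc
            exact hs0 (Int.natAbs_eq_zero.mp hc)
          omega)]
        rw [div_eq_mul_inv (3/t)]
        simp
  calc ∑ s ∈ T, psi t lam N1v s ≤ ∑ s ∈ T,
      ((if s = 0 then 4*lam^2*t^3*N1v^2 else 0)
        + (if s.natAbs = 1 then 3/t + 16*lam^2*N1v^2*t^3 else 0)
        + (3/t) * (if s.natAbs ≤ 1 then 0 else ((s:ℝ)^2)⁻¹)) := Finset.sum_le_sum hptw
  _ = (∑ s ∈ T, if s = 0 then 4*lam^2*t^3*N1v^2 else 0)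
      + (∑ s ∈ T, if s.natAbs = 1 then 3/t + 16*lam^2*N1v^2*t^3 else 0)
      + (3/t) * ∑ s ∈ T, (if s.natAbs ≤ 1 then 0 else ((s:ℝ)^2)⁻¹) := by
    rw [Finset.sum_add_distrib, Finset.sum_add_distrib, Finset.mul_sum]
  _ ≤ 4*lam^2*t^3*N1v^2 + 2*(3/t + 16*lam^2*N1v^2*t^3) + (3/t) * Zconst := by
    have e1 : (∑ s ∈ T, if s = 0 then 4*lam^2*t^3*N1v^2 else 0) ≤ 4*lam^2*t^3*N1v^2 := by
      rw [Finset.sum_ite_eq' T 0 (fun _ => 4*lam^2*t^3*N1v^2)]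
      split
      · exact le_refl _
      · positivity
    have e2 : (∑ s ∈ T, if s.natAbs = 1 then 3/t + 16*lam^2*N1v^2*t^3 else 0)
        ≤ 2*(3/t + 16*lam^2*N1v^2*t^3) := by
      rw [← Finset.sum_filter]
      have hsub : T.filter (fun s => s.natAbs = 1) ⊆ ({1, -1} : Finset ℤ) := by
        intro s hs
        rw [Finset.mem_filter] at hs
        rcases Int.natAbs_eq_iff.mp hs.2 with h | h
        · simp [h]
        · simp [h]
      have hcard : (T.filter (fun s => s.natAbs = 1)).card ≤ 2 := by
        calc _ ≤ ({1,-1} : Finset ℤ).card := Finset.card_le_card hsub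
        _ ≤ 2 := by decide
      rw [Finset.sum_const]
      have hpos : (0:ℝ) ≤ 3/t + 16*lam^2*N1v^2*t^3 := by positivity
      rw [nsmul_eq_mul]
      have hc2 : ((T.filter (fun s => s.natAbs = 1)).card : ℝ) ≤ 2 := by exact_mod_cast hcard
      exact mul_le_mul_of_nonneg_right hc2 hpos
    have e3 : (3/t) * ∑ s ∈ T, (if s.natAbs ≤ 1 then 0 else ((s:ℝ)^2)⁻¹)
        ≤ (3/t) * Zconst := by
      apply mul_le_mul_of_nonneg_left _ (by positivity)
      exact Summable.sum_le_tsum T (fun s _ => zfun_nonneg s) zfun_summable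
    linarith

-- grouping lemma
lemma group_bound {d : ℕ} (B : Finset (Fin d → ℤ)) (nfun : (Fin d → ℤ) → ℤ)
    (w : (Fin d → ℤ) → ℝ) (ψ : ℤ → ℝ) (hψ : ∀ s, 0 ≤ ψ s)
    (hw : ∀ x ∈ B, |w x| ≤ ψ (nfun x)) (M : ℝ)
    (hcard : ∀ s : ℤ, ((B.filter (fun x => nfun x = s)).card : ℝ) ≤ M)
    (Sψ : ℝ) (hSψ : ∀ T : Finset ℤ, ∑ s ∈ T, ψ s ≤ Sψ) :
    |∑ x ∈ B, w x| ≤ M * Sψ := by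
  classical
  calc |∑ x ∈ B, w x| ≤ ∑ x ∈ B, |w x| := Finset.abs_sum_le_sum_abs _ _
  _ ≤ ∑ x ∈ B, ψ (nfun x) := Finset.sum_le_sum hw
  _ = ∑ s ∈ B.image nfun, ((B.filter (fun x => nfun x = s)).card) • ψ s :=
      Finset.sum_comp ψ nfun
  _ ≤ ∑ s ∈ B.image nfun, M * ψ s := by
      apply Finset.sum_le_sum
      intro s _
      rw [nsmul_eq_mul]
      exact mul_le_mul_of_nonneg_right (hcard s) (hψ s)
  _ = M * ∑ s ∈ B.image nfun, ψ s := by rw [Finset.mul_sum]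
  _ ≤ M * Sψ := by
      have hM : 0 ≤ M := le_trans (Nat.cast_nonneg _) (hcard 0)
      exact mul_le_mul_of_nonneg_left (hSψ _) hM

lemma two_pi_pow_pos (d : ℕ) : (0:ℝ) < (2 * π) ^ d := by positivity

lemma VhatL1_nonneg {d : ℕ} (Vh : (Fin d → ℤ) → ℝ) : 0 ≤ VhatL1 Vh :=
  mul_nonneg (by positivity) (tsum_nonneg fun k => abs_nonneg _)

lemma vh_zero_off_box {d : ℕ} {rad : ℝ} {Vh : (Fin d → ℤ) → ℝ}
    (hsupp : ∀ k, rad < zNorm k → Vh k = 0) :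
    ∀ x ∉ box d ⌈rad⌉₊, Vh x = 0 := by
  intro x hx
  by_contra hv
  apply hx
  apply mem_box_of_znorm_le
  by_contra hz
  exact hv (hsupp x (lt_of_not_ge hz))

lemma vhatL1_eq_sum {d : ℕ} {rad : ℝ} {Vh : (Fin d → ℤ) → ℝ}
    (hsupp : ∀ k, rad < zNorm k → Vh k = 0) :
    VhatL1 Vh = ((2 * π) ^ d)⁻¹ * ∑ k ∈ box d ⌈rad⌉₊, |Vh k| := by
  rw [VhatL1, tsum_eq_sum (s := box d ⌈rad⌉₊)]
  intro b hb
  rw [vh_zero_off_box hsupp b hb, abs_zero]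

lemma conv_abs_le {d : ℕ} {rad : ℝ} {Vh g : (Fin d → ℤ) → ℝ}
    (hsupp : ∀ k, rad < zNorm k → Vh k = 0) (hg : ∀ x, |g x| ≤ 1) (q : Fin d → ℤ) :
    |conv Vh g q| ≤ VhatL1 Vh := by
  rw [conv, tsum_eq_sum (s := box d ⌈rad⌉₊)
    (fun b hb => by rw [vh_zero_off_box hsupp b hb, zero_mul]),
    vhatL1_eq_sum hsupp, abs_mul, abs_of_nonneg (by positivity : (0:ℝ) ≤ ((2*π)^d)⁻¹)]
  apply mul_le_mul_of_nonneg_left _ (by positivity : (0:ℝ) ≤ ((2*π)^d)⁻¹)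
  calc |∑ k ∈ box d ⌈rad⌉₊, Vh k * g (q - k)| ≤ ∑ k ∈ box d ⌈rad⌉₊, |Vh k * g (q-k)| :=
        Finset.abs_sum_le_sum_abs _ _
  _ ≤ ∑ k ∈ box d ⌈rad⌉₊, |Vh k| := by
      apply Finset.sum_le_sum
      intro k _
      rw [abs_mul]
      exact mul_le_of_le_one_right (abs_nonneg _) (hg _)

lemma chi_abs_le_one {d : ℕ} (pF : ℝ) (x : Fin d → ℤ) : |chi pF x| ≤ 1 := by
  rw [abs_of_nonneg (chi_nonneg pF x)]; exact chi_le_one pF x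

lemma chiP_abs_le_one {d : ℕ} (pF : ℝ) (x : Fin d → ℤ) : |chiP pF x| ≤ 1 := by
  rw [abs_of_nonneg (chiP_nonneg pF x)]; exact chiP_le_one pF x

lemma disp_in {d : ℕ} {pF : ℝ} (lam : ℝ) (Vh : (Fin d → ℤ) → ℝ) {q : Fin d → ℤ}
    (h : zNorm q ≤ pF) :
    disp pF lam Vh q = -((∑ i, ((q i : ℝ))^2)/2) - (lam/2) * conv Vh (chiP pF) q := by
  rw [disp, chi_of_le h, chiP_of_le h, znorm_sq]
  ring

lemma disp_out {d : ℕ} {pF : ℝ} (lam : ℝ) (Vh : (Fin d → ℤ) → ℝ) {q : Fin d → ℤ}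
    (h : ¬ zNorm q ≤ pF) :
    disp pF lam Vh q = (∑ i, ((q i : ℝ))^2)/2 - (lam/2) * conv Vh (chi pF) q := by
  rw [disp, chi_of_gt h, chiP_of_gt h, znorm_sq]
  ring

lemma kin_id {d : ℕ} (h k r : Fin d → ℤ) :
    (∑ i, (((h+k) i : ℝ))^2) - (∑ i, ((h i:ℝ))^2)
      + ((∑ i, ((r i:ℝ))^2) - (∑ i, (((r+k) i:ℝ))^2))
    = 2 * ((((∑ i, h i * k i) : ℤ) : ℝ) - (((∑ i, r i * k i) : ℤ) : ℝ)) := by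
  push_cast
  rw [← Finset.sum_sub_distrib, ← Finset.sum_sub_distrib, ← Finset.sum_add_distrib,
    ← Finset.sum_sub_distrib, Finset.mul_sum]
  apply Finset.sum_congr rfl
  intro i _
  simp only [Pi.add_apply, Int.cast_add]
  push_cast
  ring

lemma energy_H {d : ℕ} {pF lam rad : ℝ} {Vh : (Fin d → ℤ) → ℝ}
    (hsupp : ∀ k, rad < zNorm k → Vh k = 0) (hlam : 0 ≤ lam)
    {h k r : Fin d → ℤ}
    (hh : zNorm h ≤ pF) (hhk : zNorm (h+k) ≤ pF) (hr : zNorm r ≤ pF)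
    (hrk : ¬ zNorm (r+k) ≤ pF) :
    |disp pF lam Vh h - disp pF lam Vh (h+k) - disp pF lam Vh r - disp pF lam Vh (r+k)
      - ((((∑ i, h i * k i) - (∑ i, r i * k i) : ℤ)) : ℝ)| ≤ 2 * lam * VhatL1 Vh := by
  rw [disp_in lam Vh hh, disp_in lam Vh hhk, disp_in lam Vh hr, disp_out lam Vh hrk]
  have hkin := kin_id h k r
  have expand : -((∑ i, ((h i:ℝ))^2)/2) - (lam/2) * conv Vh (chiP pF) h
      - (-((∑ i, (((h+k) i:ℝ))^2)/2) - (lam/2) * conv Vh (chiP pF) (h+k))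
      - (-((∑ i, ((r i:ℝ))^2)/2) - (lam/2) * conv Vh (chiP pF) r)
      - ((∑ i, (((r+k) i:ℝ))^2)/2 - (lam/2) * conv Vh (chi pF) (r+k))
      - ((((∑ i, h i * k i) - (∑ i, r i * k i) : ℤ)) : ℝ)
      = (lam/2) * (- conv Vh (chiP pF) h + conv Vh (chiP pF) (h+k)
          + conv Vh (chiP pF) r + conv Vh (chi pF) (r+k)) := by
    push_cast at hkin ⊢
    linarith [hkin]
  rw [expand, abs_mul, abs_of_nonneg (by positivity : (0:ℝ) ≤ lam/2)]
  have b1 := conv_abs_le hsupp (chiP_abs_le_one pF) h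
  have b2 := conv_abs_le hsupp (chiP_abs_le_one pF) (h+k)
  have b3 := conv_abs_le hsupp (chiP_abs_le_one pF) r
  have b4 := conv_abs_le hsupp (chi_abs_le_one pF) (r+k)
  have habs : |- conv Vh (chiP pF) h + conv Vh (chiP pF) (h+k)
      + conv Vh (chiP pF) r + conv Vh (chi pF) (r+k)| ≤ 4 * VhatL1 Vh := by
    calc _ ≤ |- conv Vh (chiP pF) h + conv Vh (chiP pF) (h+k) + conv Vh (chiP pF) r|
          + |conv Vh (chi pF) (r+k)| := abs_add_le _ _
    _ ≤ (|- conv Vh (chiP pF) h + conv Vh (chiP pF) (h+k)| + |conv Vh (chiP pF) r|)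
          + |conv Vh (chi pF) (r+k)| := by gcongr; exact abs_add_le _ _
    _ ≤ ((|- conv Vh (chiP pF) h| + |conv Vh (chiP pF) (h+k)|) + |conv Vh (chiP pF) r|)
          + |conv Vh (chi pF) (r+k)| := by gcongr; exact abs_add_le _ _
    _ ≤ 4 * VhatL1 Vh := by rw [abs_neg]; linarith
  calc lam/2 * |_| ≤ lam/2 * (4 * VhatL1 Vh) := mul_le_mul_of_nonneg_left habs (by positivity)
  _ = 2 * lam * VhatL1 Vh := by ring

lemma energy_P {d : ℕ} {pF lam rad : ℝ} {Vh : (Fin d → ℤ) → ℝ}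
    (hsupp : ∀ k, rad < zNorm k → Vh k = 0) (hlam : 0 ≤ lam)
    {p k r : Fin d → ℤ}
    (hp : ¬ zNorm p ≤ pF) (hpk : ¬ zNorm (p-k) ≤ pF) (hr : zNorm r ≤ pF)
    (hrk : ¬ zNorm (r+k) ≤ pF) :
    |disp pF lam Vh p - disp pF lam Vh (p-k) - disp pF lam Vh r - disp pF lam Vh (r+k)
      - ((((∑ i, (p i - k i) * k i) - (∑ i, r i * k i) : ℤ)) : ℝ)| ≤ 2 * lam * VhatL1 Vh := by
  rw [disp_out lam Vh hp, disp_out lam Vh hpk, disp_in lam Vh hr, disp_out lam Vh hrk]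
  have hkin := kin_id (p - k) k r
  have hpk2 : ∀ i, ((p - k + k) i : ℤ) = p i := by intro i; simp
  have hsq : (∑ i, (((p - k + k) i : ℝ))^2) = ∑ i, ((p i:ℝ))^2 := by
    apply Finset.sum_congr rfl
    intro i _
    rw [show ((p - k + k) i) = p i by simp]
  rw [hsq] at hkin
  have expand : (∑ i, ((p i:ℝ))^2)/2 - (lam/2) * conv Vh (chi pF) p
      - ((∑ i, (((p-k) i:ℝ))^2)/2 - (lam/2) * conv Vh (chi pF) (p-k))
      - (-((∑ i, ((r i:ℝ))^2)/2) - (lam/2) * conv Vh (chiP pF) r)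
      - ((∑ i, (((r+k) i:ℝ))^2)/2 - (lam/2) * conv Vh (chi pF) (r+k))
      - ((((∑ i, (p i - k i) * k i) - (∑ i, r i * k i) : ℤ)) : ℝ)
      = (lam/2) * (- conv Vh (chi pF) p + conv Vh (chi pF) (p-k)
          + conv Vh (chiP pF) r + conv Vh (chi pF) (r+k)) := by
    have hpk3 : (∑ i, ((p-k) i * k i) : ℤ) = ∑ i, (p i - k i) * k i := by
      apply Finset.sum_congr rfl
      intro i _
      simp
    rw [← hpk3]
    push_cast at hkin ⊢
    linarith [hkin]
  rw [expand, abs_mul, abs_of_nonneg (by positivity : (0:ℝ) ≤ lam/2)]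
  have b1 := conv_abs_le hsupp (chi_abs_le_one pF) p
  have b2 := conv_abs_le hsupp (chi_abs_le_one pF) (p-k)
  have b3 := conv_abs_le hsupp (chiP_abs_le_one pF) r
  have b4 := conv_abs_le hsupp (chi_abs_le_one pF) (r+k)
  have habs : |- conv Vh (chi pF) p + conv Vh (chi pF) (p-k)
      + conv Vh (chiP pF) r + conv Vh (chi pF) (r+k)| ≤ 4 * VhatL1 Vh := by
    calc _ ≤ |- conv Vh (chi pF) p + conv Vh (chi pF) (p-k) + conv Vh (chiP pF) r|
          + |conv Vh (chi pF) (r+k)| := abs_add_le _ _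
    _ ≤ (|- conv Vh (chi pF) p + conv Vh (chi pF) (p-k)| + |conv Vh (chiP pF) r|)
          + |conv Vh (chi pF) (r+k)| := by gcongr; exact abs_add_le _ _
    _ ≤ ((|- conv Vh (chi pF) p| + |conv Vh (chi pF) (p-k)|) + |conv Vh (chiP pF) r|)
          + |conv Vh (chi pF) (r+k)| := by gcongr; exact abs_add_le _ _
    _ ≤ 4 * VhatL1 Vh := by rw [abs_neg]; linarith
  calc lam/2 * |_| ≤ lam/2 * (4 * VhatL1 Vh) := mul_le_mul_of_nonneg_left habs (by positivity)
  _ = 2 * lam * VhatL1 Vh := by ring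

lemma chi_eq_one_iff {d : ℕ} {pF : ℝ} {p : Fin d → ℤ} : chi pF p = 1 ↔ zNorm p ≤ pF := by
  constructor
  · intro h
    by_contra hc
    rw [chi_of_gt hc] at h
    norm_num at h
  · exact chi_of_le

lemma chiP_eq_one_iff {d : ℕ} {pF : ℝ} {p : Fin d → ℤ} : chiP pF p = 1 ↔ ¬ zNorm p ≤ pF := by
  constructor
  · intro h hc
    rw [chiP_of_le hc] at h
    norm_num at h
  · exact chiP_of_gt

noncomputable def Gbound (t lam N1v : ℝ) : ℝ :=
  4*lam^2*t^3*N1v^2 + 2*(3/t + 16*lam^2*N1v^2*t^3) + (3/t) * Zconst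

lemma Gbound_nonneg {t lam N1v : ℝ} (ht : 0 < t) : 0 ≤ Gbound t lam N1v :=
  add_nonneg (add_nonneg (by positivity) (by positivity))
    (mul_nonneg (by positivity) Zconst_nonneg)

lemma chi_zero_off_box {d : ℕ} {pF : ℝ} {r : Fin d → ℤ} (hr : r ∉ box d ⌈pF⌉₊) :
    chi pF r = 0 := by
  apply chi_of_gt
  intro hz
  exact hr (mem_box_of_znorm_le hz)

lemma Hdiff {d : ℕ} {pF lam t rad N1v : ℝ} {Vh : (Fin d → ℤ) → ℝ}
    (hsupp : ∀ k, rad < zNorm k → Vh k = 0)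
    (hN : VhatL1 Vh ≤ N1v) (hN0 : 0 ≤ N1v)
    (hlam : 0 < lam) (hll : lam * VhatL1 Vh ≤ 1/2)
    (ht : 0 < t) (h k : Fin d → ℤ) (hk : k ≠ 0) :
    |alphaHt pF lam t Vh h k - t * alphaH pF h k|
      ≤ ((2*π)^d)⁻¹ * ((2*⌈pF⌉₊+1 : ℕ) : ℝ)^(d-1) * Gbound t lam N1v := by
  classical
  have hΛipos : (0:ℝ) < ((2*π)^d)⁻¹ := by positivity
  set M : ℝ := ((2*⌈pF⌉₊+1 : ℕ) : ℝ)^(d-1) with hM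
  have hMpos : (0:ℝ) ≤ M := by rw [hM]; positivity
  have hRHS : (0:ℝ) ≤ ((2*π)^d)⁻¹ * M * Gbound t lam N1v :=
    mul_nonneg (mul_nonneg hΛipos.le hMpos) (Gbound_nonneg ht)
  by_cases hh : zNorm h ≤ pF
  swap
  · have e1 : alphaHt pF lam t Vh h k = 0 := by rw [alphaHt, chi_of_gt hh]; ring
    have e2 : alphaH pF h k = 0 := by rw [alphaH, chi_of_gt hh]; ring
    rw [e1, e2]
    simpa using hRHS
  by_cases hhk : zNorm (h + k) ≤ pF
  swap
  · have e1 : alphaHt pF lam t Vh h k = 0 := by rw [alphaHt, chi_of_gt hhk]; ring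
    have e2 : alphaH pF h k = 0 := by rw [alphaH, chi_of_gt hhk]; ring
    rw [e1, e2]
    simpa using hRHS
  -- main case
  set B := box d ⌈pF⌉₊ with hB
  set E : (Fin d → ℤ) → ℝ := fun r => disp pF lam Vh h - disp pF lam Vh (h + k)
      - disp pF lam Vh r - disp pF lam Vh (r + k) with hE
  set nf : (Fin d → ℤ) → ℤ := fun r => (∑ i, h i * k i) - (∑ i, r i * k i) with hnf
  set w : (Fin d → ℤ) → ℝ := fun r => chi pF r * chiP pF (r + k) *
      (deltaT t (E r) - (t/(2*π)) * (if nf r = 0 then 1 else 0)) with hw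
  have hz1 : ∀ r ∉ B, chi pF r * chiP pF (r + k) * deltaT t (E r) = 0 := by
    intro r hr
    rw [chi_zero_off_box hr, zero_mul, zero_mul]
  have hz2 : ∀ r ∉ B, chi pF r * chiP pF (r + k) *
      (if (∑ i, r i * k i) = ∑ i, h i * k i then 1 else 0) = 0 := by
    intro r hr
    rw [chi_zero_off_box hr, zero_mul, zero_mul]
  have hS1 : alphaHt pF lam t Vh h k
      = ((2*π)^d)⁻¹ * ∑ r ∈ B, chi pF r * chiP pF (r + k) * deltaT t (E r) := by
    rw [alphaHt, tsum_eq_sum hz1, chi_of_le hh, chi_of_le hhk, one_mul, one_mul]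
  have hS2 : alphaH pF h k = (1/(2*π)) * ((2*π)^d)⁻¹ *
      ∑ r ∈ B, chi pF r * chiP pF (r + k) *
        (if (∑ i, r i * k i) = ∑ i, h i * k i then 1 else 0) := by
    rw [alphaH, tsum_eq_sum hz2, chi_of_le hh, chi_of_le hhk]
    ring
  have hite : ∀ r : Fin d → ℤ, (if (∑ i, r i * k i) = ∑ i, h i * k i then (1:ℝ) else 0)
      = (if nf r = 0 then 1 else 0) := by
    intro r
    simp only [hnf]
    by_cases hc : (∑ i, r i * k i) = ∑ i, h i * k i
    · rw [if_pos hc, if_pos (show (∑ i, h i * k i) - (∑ i, r i * k i) = 0 by omega)]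
    · rw [if_neg hc, if_neg (show ¬((∑ i, h i * k i) - (∑ i, r i * k i) = 0) by omega)]
  have hsplit : ∑ r ∈ B, w r = (∑ r ∈ B, chi pF r * chiP pF (r + k) * deltaT t (E r))
      - (t/(2*π)) * ∑ r ∈ B, chi pF r * chiP pF (r + k) *
        (if (∑ i, r i * k i) = ∑ i, h i * k i then 1 else 0) := by
    rw [Finset.mul_sum, ← Finset.sum_sub_distrib]
    apply Finset.sum_congr rfl
    intro r _
    simp only [hw, hite r]
    ring
  have key : alphaHt pF lam t Vh h k - t * alphaH pF h k = ((2*π)^d)⁻¹ * ∑ r ∈ B, w r := by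
    rw [hS1, hS2, hsplit]
    ring
  rw [key, abs_mul, abs_of_pos hΛipos]
  rw [mul_assoc]
  apply mul_le_mul_of_nonneg_left _ hΛipos.le
  -- group bound
  apply group_bound B nf w (psi t lam N1v) (psi_nonneg ht) _ M _ (Gbound t lam N1v)
  · -- psi sum bound
    intro T
    exact psi_sum_bound ht hlam.le hN0 T
  · -- pointwise bound
    intro r hrB
    simp only [hw]
    rcases chi_mem pF r with hcr | hcr
    · rw [hcr, zero_mul, zero_mul, abs_zero]
      exact psi_nonneg ht _
    rcases eq_or_ne (chiP pF (r+k)) 0 with hcrk | hcrk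
    · rw [hcrk, mul_zero, zero_mul, abs_zero]
      exact psi_nonneg ht _
    have hcrk1 : chiP pF (r+k) = 1 := by
      rcases chi_mem pF (r+k) with h1 | h1
      · rw [chiP, h1]; norm_num
      · exfalso; apply hcrk; rw [chiP, h1]; norm_num
    rw [hcr, hcrk1, one_mul, one_mul]
    have hr : zNorm r ≤ pF := chi_eq_one_iff.mp hcr
    have hrk : ¬ zNorm (r+k) ≤ pF := chiP_eq_one_iff.mp hcrk1
    have hen := energy_H hsupp hlam.le hh hhk hr hrk
    have h1 : |E r - (nf r : ℝ)| ≤ 1 := by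
      simp only [hE, hnf]
      push_cast at hen ⊢
      calc _ ≤ 2 * lam * VhatL1 Vh := hen
      _ = 2 * (lam * VhatL1 Vh) := by ring
      _ ≤ 2 * (1/2) := by linarith
      _ = 1 := by norm_num
    have h2 : |E r - (nf r : ℝ)| ≤ 2 * lam * N1v := by
      simp only [hE, hnf]
      push_cast at hen ⊢
      calc _ ≤ 2 * lam * VhatL1 Vh := hen
      _ ≤ 2 * lam * N1v := by
          apply mul_le_mul_of_nonneg_left hN (by positivity)
    exact scalar_bound ht hlam.le hN0 h1 h2
  · -- card bound
    intro s
    have : B.filter (fun x => nf x = s) = B.filter (fun x => (∑ i, x i * k i) = (∑ i, h i * k i) - s) := by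
      apply Finset.filter_congr
      intro x _
      simp only [hnf]
      omega
    rw [this, hB, hM]
    exact slice_card ⌈pF⌉₊ k hk _

lemma Pdiff {d : ℕ} {pF lam t rad N1v : ℝ} {Vh : (Fin d → ℤ) → ℝ}
    (hsupp : ∀ k, rad < zNorm k → Vh k = 0)
    (hN : VhatL1 Vh ≤ N1v) (hN0 : 0 ≤ N1v)
    (hlam : 0 < lam) (hll : lam * VhatL1 Vh ≤ 1/2)
    (ht : 0 < t) (p k : Fin d → ℤ) (hk : k ≠ 0) :
    |alphaPt pF lam t Vh p k - t * alphaP pF p k|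
      ≤ ((2*π)^d)⁻¹ * ((2*⌈pF⌉₊+1 : ℕ) : ℝ)^(d-1) * Gbound t lam N1v := by
  classical
  have hΛipos : (0:ℝ) < ((2*π)^d)⁻¹ := by positivity
  set M : ℝ := ((2*⌈pF⌉₊+1 : ℕ) : ℝ)^(d-1) with hM
  have hMpos : (0:ℝ) ≤ M := by rw [hM]; positivity
  have hRHS : (0:ℝ) ≤ ((2*π)^d)⁻¹ * M * Gbound t lam N1v :=
    mul_nonneg (mul_nonneg hΛipos.le hMpos) (Gbound_nonneg ht)
  by_cases hp : zNorm p ≤ pF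
  · have e1 : alphaPt pF lam t Vh p k = 0 := by rw [alphaPt, chiP_of_le hp]; ring
    have e2 : alphaP pF p k = 0 := by rw [alphaP, chiP_of_le hp]; ring
    rw [e1, e2]
    simpa using hRHS
  by_cases hpk : zNorm (p - k) ≤ pF
  · have e1 : alphaPt pF lam t Vh p k = 0 := by rw [alphaPt, chiP_of_le hpk]; ring
    have e2 : alphaP pF p k = 0 := by rw [alphaP, chiP_of_le hpk]; ring
    rw [e1, e2]
    simpa using hRHS
  -- main case
  set B := box d ⌈pF⌉₊ with hB
  set E : (Fin d → ℤ) → ℝ := fun r => disp pF lam Vh p - disp pF lam Vh (p - k)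
      - disp pF lam Vh r - disp pF lam Vh (r + k) with hE
  set nf : (Fin d → ℤ) → ℤ := fun r => (∑ i, (p i - k i) * k i) - (∑ i, r i * k i) with hnf
  set w : (Fin d → ℤ) → ℝ := fun r => chi pF r * chiP pF (r + k) *
      (deltaT t (E r) - (t/(2*π)) * (if nf r = 0 then 1 else 0)) with hw
  have hz1 : ∀ r ∉ B, chi pF r * chiP pF (r + k) * deltaT t (E r) = 0 := by
    intro r hr
    rw [chi_zero_off_box hr, zero_mul, zero_mul]
  have hz2 : ∀ r ∉ B, chi pF r * chiP pF (r + k) *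
      (if (∑ i, r i * k i) = ∑ i, (p i - k i) * k i then 1 else 0) = 0 := by
    intro r hr
    rw [chi_zero_off_box hr, zero_mul, zero_mul]
  have hS1 : alphaPt pF lam t Vh p k
      = ((2*π)^d)⁻¹ * ∑ r ∈ B, chi pF r * chiP pF (r + k) * deltaT t (E r) := by
    rw [alphaPt, tsum_eq_sum hz1, chiP_of_gt hp, chiP_of_gt hpk, one_mul, one_mul]
  have hS2 : alphaP pF p k = (1/(2*π)) * ((2*π)^d)⁻¹ *
      ∑ r ∈ B, chi pF r * chiP pF (r + k) *
        (if (∑ i, r i * k i) = ∑ i, (p i - k i) * k i then 1 else 0) := by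
    rw [alphaP, tsum_eq_sum hz2, chiP_of_gt hp, chiP_of_gt hpk]
    ring
  have hite : ∀ r : Fin d → ℤ, (if (∑ i, r i * k i) = ∑ i, (p i - k i) * k i then (1:ℝ) else 0)
      = (if nf r = 0 then 1 else 0) := by
    intro r
    simp only [hnf]
    by_cases hc : (∑ i, r i * k i) = ∑ i, (p i - k i) * k i
    · rw [if_pos hc, if_pos (show (∑ i, (p i - k i) * k i) - (∑ i, r i * k i) = 0 by omega)]
    · rw [if_neg hc, if_neg (show ¬((∑ i, (p i - k i) * k i) - (∑ i, r i * k i) = 0) by omega)]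
  have hsplit : ∑ r ∈ B, w r = (∑ r ∈ B, chi pF r * chiP pF (r + k) * deltaT t (E r))
      - (t/(2*π)) * ∑ r ∈ B, chi pF r * chiP pF (r + k) *
        (if (∑ i, r i * k i) = ∑ i, (p i - k i) * k i then 1 else 0) := by
    rw [Finset.mul_sum, ← Finset.sum_sub_distrib]
    apply Finset.sum_congr rfl
    intro r _
    simp only [hw, hite r]
    ring
  have key : alphaPt pF lam t Vh p k - t * alphaP pF p k = ((2*π)^d)⁻¹ * ∑ r ∈ B, w r := by
    rw [hS1, hS2, hsplit]
    ring
  rw [key, abs_mul, abs_of_pos hΛipos]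
  rw [mul_assoc]
  apply mul_le_mul_of_nonneg_left _ hΛipos.le
  apply group_bound B nf w (psi t lam N1v) (psi_nonneg ht) _ M _ (Gbound t lam N1v)
  · intro T
    exact psi_sum_bound ht hlam.le hN0 T
  · intro r hrB
    simp only [hw]
    rcases chi_mem pF r with hcr | hcr
    · rw [hcr, zero_mul, zero_mul, abs_zero]
      exact psi_nonneg ht _
    rcases eq_or_ne (chiP pF (r+k)) 0 with hcrk | hcrk
    · rw [hcrk, mul_zero, zero_mul, abs_zero]
      exact psi_nonneg ht _
    have hcrk1 : chiP pF (r+k) = 1 := by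
      rcases chi_mem pF (r+k) with h1 | h1
      · rw [chiP, h1]; norm_num
      · exfalso; apply hcrk; rw [chiP, h1]; norm_num
    rw [hcr, hcrk1, one_mul, one_mul]
    have hr : zNorm r ≤ pF := chi_eq_one_iff.mp hcr
    have hrk : ¬ zNorm (r+k) ≤ pF := chiP_eq_one_iff.mp hcrk1
    have hen := energy_P hsupp hlam.le hp hpk hr hrk
    have h1 : |E r - (nf r : ℝ)| ≤ 1 := by
      simp only [hE, hnf]
      push_cast at hen ⊢
      calc _ ≤ 2 * lam * VhatL1 Vh := hen
      _ = 2 * (lam * VhatL1 Vh) := by ring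
      _ ≤ 2 * (1/2) := by linarith
      _ = 1 := by norm_num
    have h2 : |E r - (nf r : ℝ)| ≤ 2 * lam * N1v := by
      simp only [hE, hnf]
      push_cast at hen ⊢
      calc _ ≤ 2 * lam * VhatL1 Vh := hen
      _ ≤ 2 * lam * N1v := by
          apply mul_le_mul_of_nonneg_left hN (by positivity)
    exact scalar_bound ht hlam.le hN0 h1 h2
  · intro s
    have : B.filter (fun x => nf x = s)
        = B.filter (fun x => (∑ i, x i * k i) = (∑ i, (p i - k i) * k i) - s) := by
      apply Finset.filter_congr
      intro x _
      simp only [hnf]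
      omega
    rw [this, hB, hM]
    exact slice_card ⌈pF⌉₊ k hk _

lemma abs_comb (a b c e : ℝ) : |a - b + c - e| ≤ |a| + |b| + |c| + |e| := by
  have h1 : a - b + c - e = (a + -b) + (c + -e) := by ring
  rw [h1]
  calc |(a + -b) + (c + -e)| ≤ |a + -b| + |c + -e| := abs_add_le _ _
  _ ≤ (|a| + |-b|) + (|c| + |-e|) := add_le_add (abs_add_le _ _) (abs_add_le _ _)
  _ = |a| + |b| + |c| + |e| := by rw [abs_neg, abs_neg]; ring

lemma Gbound_le {t lam N1v : ℝ} (ht : 0 < t) :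
    Gbound t lam N1v ≤ (36*N1v^2 + 6 + 3*Zconst) * (lam^2*t^3 + 1/t) := by
  have hid : (36*N1v^2 + 6 + 3*Zconst) * (lam^2*t^3 + 1/t) - Gbound t lam N1v
      = (6 + 3*Zconst) * (lam^2*t^3) + 36*N1v^2*(1/t) := by
    rw [Gbound]; ring
  have h1 : (0:ℝ) ≤ (6 + 3*Zconst) * (lam^2*t^3) :=
    mul_nonneg (by linarith [Zconst_nonneg]) (by positivity)
  have h2 : (0:ℝ) ≤ 36*N1v^2*(1/t) := by positivity
  linarith

/-- Comparison of `B_t` and `t·𝓑`: there is `C > 0`, depending only on `d`, an upper bound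
`N₁` for `‖V̂‖₁` and an upper bound `S` for `∑ V̂(k)²`, such that for every admissible `V̂`,
any `λ > 0` with `λ·‖V̂‖₁ ≤ 1/2`, any `p_F ≥ 1`, any bounded `f` and any `t > 0`,
`sup_q |B_t[f](q) − t·𝓑[f](q)|
  ≤ C·t·(1/t² + (λt)²)·p_F^{d−1}·(sup|1−f|)·(sup|f|)`. -/
theorem stmt12 (d : ℕ) (hd : 1 ≤ d) (N1 S : ℝ) :
    ∃ C : ℝ, 0 < C ∧
      ∀ r : ℝ, 0 < r → ∀ Vh : (Fin d → ℤ) → ℝ,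
        (∀ k, r < zNorm k → Vh k = 0) → (∀ k, Vh (-k) = Vh k) → Vh 0 = 0 →
        VhatL1 Vh ≤ N1 → (∑' k : Fin d → ℤ, (Vh k) ^ 2) ≤ S →
        ∀ lam : ℝ, 0 < lam → lam * VhatL1 Vh ≤ 1 / 2 →
        ∀ pF : ℝ, 1 ≤ pF →
        ∀ f : (Fin d → ℤ) → ℝ, (∃ M, ∀ p, |f p| ≤ M) →
        ∀ t : ℝ, 0 < t →
        ∀ q : Fin d → ℤ,
          |Bt pF lam t Vh f q - t * Blim pF Vh f q|
            ≤ C * t * (1 / t ^ 2 + (lam * t) ^ 2) * pF ^ (d - 1) *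
              (⨆ p, |1 - f p|) * (⨆ p, |f p|) := by
  classical
  have hΛipos : (0:ℝ) < ((2*π)^d)⁻¹ := by positivity
  have hDpos : (0:ℝ) < 36*(max N1 0)^2 + 6 + 3*Zconst := by
    have := Zconst_nonneg
    nlinarith [sq_nonneg (max N1 0)]
  refine ⟨8*π*(((2*π)^d)⁻¹)^2*5^(d-1)*(max S 0 + 1)*(36*(max N1 0)^2 + 6 + 3*Zconst),
    by positivity, ?_⟩
  intro rad hrad Vh hsupp hsym hV0 hN1 hS lam hlam hll pF hpF f hf t ht q
  set N1v : ℝ := max N1 0 with hN1v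
  have hN0 : (0:ℝ) ≤ N1v := le_max_right _ _
  have hNle : VhatL1 Vh ≤ N1v := le_trans hN1 (le_max_left _ _)
  set D : ℝ := 36*N1v^2 + 6 + 3*Zconst with hDdef
  obtain ⟨Mf, hMf⟩ := hf
  have hbddf : BddAbove (Set.range fun p => |f p|) := by
    refine ⟨Mf, ?_⟩
    rintro x ⟨p, rfl⟩
    exact hMf p
  have hbddg : BddAbove (Set.range fun p => |1 - f p|) := by
    refine ⟨1 + Mf, ?_⟩
    rintro x ⟨p, rfl⟩
    calc |1 - f p| = |1 + -(f p)| := by rw [sub_eq_add_neg]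
    _ ≤ |(1:ℝ)| + |-(f p)| := abs_add_le _ _
    _ = 1 + |f p| := by rw [abs_neg, abs_one]
    _ ≤ 1 + Mf := by linarith [hMf p]
  set FS : ℝ := ⨆ p, |f p| with hFS
  set GS : ℝ := ⨆ p, |1 - f p| with hGS
  have hFb : ∀ p, |f p| ≤ FS := fun p => le_ciSup hbddf p
  have hGb : ∀ p, |1 - f p| ≤ GS := fun p => le_ciSup hbddg p
  have hF0 : 0 ≤ FS := le_trans (abs_nonneg (f q)) (hFb q)
  have hG0 : 0 ≤ GS := le_trans (abs_nonneg (1 - f q)) (hGb q)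
  set KB := box d ⌈rad⌉₊ with hKB
  set Mhat : ℝ := ((2*⌈pF⌉₊+1 : ℕ) : ℝ)^(d-1) with hMhat
  have hMhat0 : (0:ℝ) ≤ Mhat := by rw [hMhat]; positivity
  set Gb : ℝ := Gbound t lam N1v with hGbdef
  have hGb0 : 0 ≤ Gb := Gbound_nonneg ht
  set Ab : ℝ := ((2*π)^d)⁻¹ * Mhat * Gb with hAb
  have hAb0 : 0 ≤ Ab := mul_nonneg (mul_nonneg hΛipos.le hMhat0) hGb0
  set X : (Fin d → ℤ) → ℝ := fun k =>
      alphaHt pF lam t Vh (q - k) k * f (q - k) * (1 - f q)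
      - alphaHt pF lam t Vh q k * f q * (1 - f (q + k))
      + alphaPt pF lam t Vh (q + k) k * f (q + k) * (1 - f q)
      - alphaPt pF lam t Vh q k * f q * (1 - f (q - k)) with hX
  set Y : (Fin d → ℤ) → ℝ := fun k =>
      alphaH pF (q - k) k * f (q - k) * (1 - f q)
      - alphaH pF q k * f q * (1 - f (q + k))
      + alphaP pF (q + k) k * f (q + k) * (1 - f q)
      - alphaP pF q k * f q * (1 - f (q - k)) with hY
  have hz1 : ∀ k ∉ KB, (Vh k)^2 * X k = 0 := by
    intro k hk
    rw [vh_zero_off_box hsupp k hk]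
    norm_num
  have hz2 : ∀ k ∉ KB, (Vh k)^2 * Y k = 0 := by
    intro k hk
    rw [vh_zero_off_box hsupp k hk]
    norm_num
  have hBt : Bt pF lam t Vh f q = 2*π*((2*π)^d)⁻¹ * ∑ k ∈ KB, (Vh k)^2 * X k := by
    rw [Bt, tsum_eq_sum hz1]
  have hBl : Blim pF Vh f q = 2*π*((2*π)^d)⁻¹ * ∑ k ∈ KB, (Vh k)^2 * Y k := by
    rw [Blim, tsum_eq_sum hz2]
  have hsplit : ∑ k ∈ KB, (Vh k)^2 * (X k - t * Y k)
      = (∑ k ∈ KB, (Vh k)^2 * X k) - t * ∑ k ∈ KB, (Vh k)^2 * Y k := by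
    rw [Finset.mul_sum, ← Finset.sum_sub_distrib]
    apply Finset.sum_congr rfl
    intro k _
    ring
  have hdiff : Bt pF lam t Vh f q - t * Blim pF Vh f q
      = 2*π*((2*π)^d)⁻¹ * ∑ k ∈ KB, (Vh k)^2 * (X k - t * Y k) := by
    rw [hBt, hBl, hsplit]
    ring
  have hterm : ∀ k ∈ KB, |(Vh k)^2 * (X k - t * Y k)|
      ≤ (Vh k)^2 * (4 * Ab * (FS * GS)) := by
    intro k _
    rcases eq_or_ne k 0 with rfl | hk0
    · rw [hV0]
      norm_num
    rw [abs_mul, abs_of_nonneg (sq_nonneg (Vh k) : (0:ℝ) ≤ (Vh k)^2)]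
    apply mul_le_mul_of_nonneg_left _ (sq_nonneg (Vh k))
    have hfour : ∀ (Δ : ℝ) (a b : Fin d → ℤ), |Δ| ≤ Ab →
        |Δ * (f a * (1 - f b))| ≤ Ab * (FS * GS) := by
      intro Δ a b hΔ
      rw [abs_mul, abs_mul]
      have h1 : |f a| * |1 - f b| ≤ FS * GS :=
        mul_le_mul (hFb a) (hGb b) (abs_nonneg _) hF0
      exact mul_le_mul hΔ h1 (mul_nonneg (abs_nonneg _) (abs_nonneg _)) hAb0
    have hre : X k - t * Y k
        = (alphaHt pF lam t Vh (q-k) k - t * alphaH pF (q-k) k) * (f (q-k) * (1 - f q))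
        - (alphaHt pF lam t Vh q k - t * alphaH pF q k) * (f q * (1 - f (q+k)))
        + (alphaPt pF lam t Vh (q+k) k - t * alphaP pF (q+k) k) * (f (q+k) * (1 - f q))
        - (alphaPt pF lam t Vh q k - t * alphaP pF q k) * (f q * (1 - f (q-k))) := by
      simp only [hX, hY]
      ring
    rw [hre]
    have b1 := hfour _ (q-k) q (Hdiff hsupp hNle hN0 hlam hll ht (q-k) k hk0)
    have b2 := hfour _ q (q+k) (Hdiff hsupp hNle hN0 hlam hll ht q k hk0)
    have b3 := hfour _ (q+k) q (Pdiff hsupp hNle hN0 hlam hll ht (q+k) k hk0)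
    have b4 := hfour _ q (q-k) (Pdiff hsupp hNle hN0 hlam hll ht q k hk0)
    calc |_| ≤ _ := abs_comb _ _ _ _
    _ ≤ 4 * Ab * (FS * GS) := by
        rw [hAb] at b1 b2 b3 b4 ⊢
        linarith [b1, b2, b3, b4]
  have hsum : ∑ k ∈ KB, (Vh k)^2 ≤ max S 0 + 1 := by
    have he : ∑ k ∈ KB, (Vh k)^2 = ∑' k : Fin d → ℤ, (Vh k)^2 := by
      symm
      apply tsum_eq_sum
      intro b hb
      rw [vh_zero_off_box hsupp b hb]
      norm_num
    rw [he]
    calc (∑' k : Fin d → ℤ, (Vh k)^2) ≤ S := hS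
    _ ≤ max S 0 := le_max_left _ _
    _ ≤ max S 0 + 1 := by linarith
  -- main chain
  have step1 : |Bt pF lam t Vh f q - t * Blim pF Vh f q|
      ≤ 2*π*((2*π)^d)⁻¹ * ((max S 0 + 1) * (4 * Ab * (FS * GS))) := by
    rw [hdiff, abs_mul, abs_of_nonneg (by positivity : (0:ℝ) ≤ 2*π*((2*π)^d)⁻¹)]
    apply mul_le_mul_of_nonneg_left _ (by positivity : (0:ℝ) ≤ 2*π*((2*π)^d)⁻¹)
    calc |∑ k ∈ KB, (Vh k)^2 * (X k - t * Y k)|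
        ≤ ∑ k ∈ KB, |(Vh k)^2 * (X k - t * Y k)| := Finset.abs_sum_le_sum_abs _ _
    _ ≤ ∑ k ∈ KB, (Vh k)^2 * (4 * Ab * (FS * GS)) := Finset.sum_le_sum hterm
    _ = (∑ k ∈ KB, (Vh k)^2) * (4 * Ab * (FS * GS)) := by rw [← Finset.sum_mul]
    _ ≤ (max S 0 + 1) * (4 * Ab * (FS * GS)) := by
        apply mul_le_mul_of_nonneg_right hsum
        positivity
  have hceil : ((2*⌈pF⌉₊+1 : ℕ) : ℝ) ≤ 5 * pF := by
    push_cast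
    have h1 : (⌈pF⌉₊ : ℝ) < pF + 1 := Nat.ceil_lt_add_one (by linarith)
    linarith
  have hMhatle : Mhat ≤ 5^(d-1) * pF^(d-1) := by
    rw [hMhat, ← mul_pow]
    apply pow_le_pow_left₀ (Nat.cast_nonneg _) hceil
  have hGble : Gb ≤ D * (lam^2*t^3 + 1/t) := Gbound_le ht
  have hAble : Ab ≤ ((2*π)^d)⁻¹ * ((5^(d-1) * pF^(d-1)) * (D * (lam^2*t^3 + 1/t))) := by
    rw [hAb, mul_assoc]
    apply mul_le_mul_of_nonneg_left _ hΛipos.le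
    apply mul_le_mul hMhatle hGble hGb0
    positivity
  have step2 : 2*π*((2*π)^d)⁻¹ * ((max S 0 + 1) * (4 * Ab * (FS * GS)))
      ≤ 2*π*((2*π)^d)⁻¹ * ((max S 0 + 1) *
        (4 * (((2*π)^d)⁻¹ * ((5^(d-1) * pF^(d-1)) * (D * (lam^2*t^3 + 1/t)))) * (FS * GS))) := by
    apply mul_le_mul_of_nonneg_left _ (by positivity : (0:ℝ) ≤ 2*π*((2*π)^d)⁻¹)
    apply mul_le_mul_of_nonneg_left _ (by positivity : (0:ℝ) ≤ max S 0 + 1)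
    apply mul_le_mul_of_nonneg_right _ (mul_nonneg hF0 hG0)
    linarith [hAble]
  have hfin : 2*π*((2*π)^d)⁻¹ * ((max S 0 + 1) *
        (4 * (((2*π)^d)⁻¹ * ((5^(d-1) * pF^(d-1)) * (D * (lam^2*t^3 + 1/t)))) * (FS * GS)))
      = (8*π*(((2*π)^d)⁻¹)^2*5^(d-1)*(max S 0 + 1)*(36*(max N1 0)^2 + 6 + 3*Zconst))
        * t * (1 / t ^ 2 + (lam * t) ^ 2) * pF ^ (d - 1) * GS * FS := by
    have htt : t * (1 / t ^ 2 + (lam * t) ^ 2) = lam^2*t^3 + 1/t := by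
      field_simp
      ring
    rw [hDdef, hN1v]
    have : (8*π*(((2*π)^d)⁻¹)^2*5^(d-1)*(max S 0 + 1)*(36*(max N1 0)^2 + 6 + 3*Zconst))
        * t * (1 / t ^ 2 + (lam * t) ^ 2) * pF ^ (d - 1) * GS * FS
      = (8*π*(((2*π)^d)⁻¹)^2*5^(d-1)*(max S 0 + 1)*(36*(max N1 0)^2 + 6 + 3*Zconst))
        * (t * (1 / t ^ 2 + (lam * t) ^ 2)) * pF ^ (d - 1) * GS * FS := by ring
    rw [this, htt]
    ring
  calc |Bt pF lam t Vh f q - t * Blim pF Vh f q|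
      ≤ _ := step1
  _ ≤ _ := step2
  _ = _ := hfin
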